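/- arXiv:2002.06690 — 3 statements merged into one kernel-verified Lean document; each statement's English description precedes it below -/
import Mathlib

section
/- Let G be a connected bipartite cubic graph with parts of size n ≥ 7 and girth at least 6. Then the dimension of the binary code whose parity-check matrix is the biadjacency matrix H of G is at most 5n/6. -/
open Finset

namespace Stmt7Aux

set_option linter.unusedSectionVars false

variable {n : ℕ} (G : SimpleGraph (Fin n ⊕ Fin n)) [DecidableRel G.Adj]

/-- right neighbors of a left vertex `b`. -/
def rightN (b : Fin n) : Finset (Fin n) :=
  univ.filter (fun c => G.Adj (Sum.inr c) (Sum.inl b))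

/-- left neighbors of a right vertex `c`. -/
def leftN (c : Fin n) : Finset (Fin n) :=
  univ.filter (fun b => G.Adj (Sum.inr c) (Sum.inl b))

lemma card_leftN (hbip₂ : ∀ a b, ¬ G.Adj (Sum.inr a) (Sum.inr b))
    (hreg : ∀ v, (G.neighborSet v).ncard = 3) (c : Fin n) : (leftN G c).card = 3 := by
  have h : G.neighborSet (Sum.inr c) = Sum.inl '' (leftN G c : Set (Fin n)) := by
    ext w
    cases w with
    | inl b => simp [leftN, SimpleGraph.mem_neighborSet]
    | inr a => simp [leftN, SimpleGraph.mem_neighborSet, hbip₂ c a]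
  have h3 := hreg (Sum.inr c)
  rwa [h, Set.ncard_image_of_injective _ Sum.inl_injective, Set.ncard_coe_finset] at h3

lemma card_rightN (hbip₁ : ∀ a b, ¬ G.Adj (Sum.inl a) (Sum.inl b))
    (hreg : ∀ v, (G.neighborSet v).ncard = 3) (b : Fin n) : (rightN G b).card = 3 := by
  have h : G.neighborSet (Sum.inl b) = Sum.inr '' (rightN G b : Set (Fin n)) := by
    ext w
    cases w with
    | inl a => simp [rightN, SimpleGraph.mem_neighborSet, hbip₁ b a]
    | inr c => simp [rightN, SimpleGraph.mem_neighborSet, G.adj_comm]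
  have h3 := hreg (Sum.inl b)
  rwa [h, Set.ncard_image_of_injective _ Sum.inr_injective, Set.ncard_coe_finset] at h3

lemma no_two_common (hgirth : 6 ≤ G.egirth) {u v : Fin n} (huv : u ≠ v)
    {c c' : Fin n} (hcc : c ≠ c')
    (h1 : G.Adj (Sum.inr c) (Sum.inl u)) (h2 : G.Adj (Sum.inr c) (Sum.inl v))
    (h3 : G.Adj (Sum.inr c') (Sum.inl u)) (h4 : G.Adj (Sum.inr c') (Sum.inl v)) :
    False := by
  let w : G.Walk (Sum.inl u) (Sum.inl u) :=
    .cons h1.symm (.cons h2 (.cons h4.symm (.cons h3 .nil)))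
  have hc : w.IsCycle := by
    rw [SimpleGraph.Walk.isCycle_def]
    refine ⟨?_, by simp [w], ?_⟩
    · rw [SimpleGraph.Walk.isTrail_def]
      simp only [w, SimpleGraph.Walk.edges_cons, SimpleGraph.Walk.edges_nil,
        List.nodup_cons, List.mem_cons, List.not_mem_nil, or_false, List.nodup_nil, and_true,
        Sym2.eq, Sym2.rel_iff', Prod.mk.injEq, Prod.swap_prod_mk]
      refine ⟨?_, ?_, ?_⟩ <;> push_neg <;>
        simp_all [Sum.inl.injEq, Sum.inr.injEq, huv.symm, hcc, hcc.symm, huv]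
    · simp only [w, SimpleGraph.Walk.support_cons, SimpleGraph.Walk.support_nil,
        List.tail_cons, List.nodup_cons, List.mem_cons, List.not_mem_nil, or_false,
        List.nodup_nil, and_true]
      refine ⟨?_, ?_, ?_⟩ <;> simp_all [huv.symm, hcc, hcc.symm]
  have hle := SimpleGraph.le_egirth.mp hgirth _ w hc
  simp only [w, SimpleGraph.Walk.length_cons, SimpleGraph.Walk.length_nil] at hle
  norm_num at hle

/-- adjacency in the "bit graph" Γ : distinct left vertices sharing a right neighbor. -/
def adjG (u v : Fin n) : Prop := u ≠ v ∧ (rightN G u ∩ rightN G v).Nonempty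

instance (u v : Fin n) : Decidable (adjG G u v) :=
  inferInstanceAs (Decidable (_ ∧ _))

lemma adjG_symm {u v : Fin n} (h : adjG G u v) : adjG G v u := by
  obtain ⟨h1, c, hc⟩ := h
  exact ⟨h1.symm, c, by simpa [Finset.mem_inter, and_comm] using hc⟩

/-- Γ-neighbors of u. -/
def nbrG (u : Fin n) : Finset (Fin n) := univ.filter (adjG G u)

lemma mem_nbrG {u v : Fin n} : v ∈ nbrG G u ↔ adjG G u v := by simp [nbrG]

lemma card_nbrG_le (hbip₁ : ∀ a b, ¬ G.Adj (Sum.inl a) (Sum.inl b))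
    (hbip₂ : ∀ a b, ¬ G.Adj (Sum.inr a) (Sum.inr b))
    (hreg : ∀ v, (G.neighborSet v).ncard = 3) (u : Fin n) :
    (nbrG G u).card ≤ 6 := by
  have hsub : nbrG G u ⊆ (rightN G u).biUnion (fun c => (leftN G c).erase u) := by
    intro v hv
    rw [mem_nbrG] at hv
    obtain ⟨hne, c, hc⟩ := hv
    rw [Finset.mem_inter] at hc
    refine Finset.mem_biUnion.2 ⟨c, hc.1, ?_⟩
    refine Finset.mem_erase.2 ⟨hne.symm, ?_⟩
    simpa [leftN, rightN] using hc.2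
  calc (nbrG G u).card ≤ ((rightN G u).biUnion (fun c => (leftN G c).erase u)).card :=
        Finset.card_le_card hsub
    _ ≤ ∑ c ∈ rightN G u, ((leftN G c).erase u).card := Finset.card_biUnion_le
    _ ≤ ∑ c ∈ rightN G u, 2 := by
        refine Finset.sum_le_sum (fun c hc => ?_)
        have hu : u ∈ leftN G c := by
          simp only [rightN, Finset.mem_filter] at hc
          simp [leftN, hc.2]
        have := Finset.card_erase_of_mem hu
        have h3 : (leftN G c).card = 3 := card_leftN G hbip₂ hreg c
        omega
    _ = 2 * (rightN G u).card := by rw [Finset.sum_const, smul_eq_mul, mul_comm]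
    _ ≤ 6 := by
        have := card_rightN G hbip₁ hreg u
        omega

/-- two distinct left vertices have at most one common right neighbor. -/
lemma card_common_le (hgirth : 6 ≤ G.egirth) {u v : Fin n} (huv : u ≠ v) :
    (rightN G u ∩ rightN G v).card ≤ 1 := by
  by_contra h
  push_neg at h
  obtain ⟨c, hc, c', hc', hcc⟩ := Finset.one_lt_card.1 h
  rw [Finset.mem_inter] at hc hc'
  simp only [rightN, Finset.mem_filter] at hc hc'
  exact no_two_common G hgirth huv hcc hc.1.2 hc.2.2 hc'.1.2 hc'.2.2

lemma cross (hbip₁ : ∀ a b, ¬ G.Adj (Sum.inl a) (Sum.inl b))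
    (hbip₂ : ∀ a b, ¬ G.Adj (Sum.inr a) (Sum.inr b)) (R : Finset (Fin n)) :
    ∀ (k : ℕ) (x y : Fin n ⊕ Fin n) (p : G.Walk x y), p.length ≤ k →
    ∀ a b, x = Sum.inl a → y = Sum.inl b → a ∈ R → b ∉ R →
    ∃ u v, u ∈ R ∧ v ∉ R ∧ adjG G u v := by
  intro k
  induction k with
  | zero =>
    intro x y p hp a b hx hy ha hb
    have h0 : p.length = 0 := Nat.le_zero.1 hp
    have hxy := SimpleGraph.Walk.eq_of_length_eq_zero h0
    obtain rfl : a = b := Sum.inl.inj (hx.symm.trans (hxy.trans hy))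
    exact absurd ha hb
  | succ k ih =>
    intro x y p hp a b hx hy ha hb
    cases p with
    | nil =>
      rw [hx] at hy
      obtain rfl : a = b := Sum.inl.inj hy
      exact absurd ha hb
    | cons h q =>
      rename_i z
      subst hx
      cases z with
      | inl a' => exact absurd h (hbip₁ a a')
      | inr c =>
        cases q with
        | nil => simp at hy
        | cons h' q' =>
          rename_i z'
          cases z' with
          | inr c' => exact absurd h' (hbip₂ c c')
          | inl a' =>
            by_cases ha' : a' ∈ R
            · refine ih _ y q' ?_ a' b rfl hy ha' hb
              simp only [SimpleGraph.Walk.length_cons] at hp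
              omega
            · refine ⟨a, a', ha, ha', ?_, c, ?_⟩
              · rintro rfl; exact ha' ha
              · simp only [Finset.mem_inter, rightN, Finset.mem_filter, Finset.mem_univ,
                  true_and]
                exact ⟨h.symm, h'⟩

/-- closed Γ-neighborhood of a finset. -/
def clN (S : Finset (Fin n)) : Finset (Fin n) := S ∪ S.biUnion (nbrG G)

lemma mem_clN {S : Finset (Fin n)} {v : Fin n} :
    v ∈ clN G S ↔ v ∈ S ∨ ∃ u ∈ S, adjG G u v := by
  simp [clN, nbrG]

lemma clN_mono {S S' : Finset (Fin n)} (h : S ⊆ S') : clN G S ⊆ clN G S' := by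
  intro x hx
  rw [mem_clN] at hx ⊢
  rcases hx with h1 | ⟨u, hu, h2⟩
  · exact Or.inl (h h1)
  · exact Or.inr ⟨u, h hu, h2⟩

lemma greedy (hconn : G.Connected)
    (hbip₁ : ∀ a b, ¬ G.Adj (Sum.inl a) (Sum.inl b))
    (hbip₂ : ∀ a b, ¬ G.Adj (Sum.inr a) (Sum.inr b))
    (hreg : ∀ v, (G.neighborSet v).ncard = 3) (hn : 0 < n) :
    ∃ S : Finset (Fin n), S.Nonempty ∧ (∀ u ∈ S, ∀ v ∈ S, ¬ adjG G u v) ∧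
      (∀ b, b ∉ S → ∃ u ∈ S, adjG G u b) ∧ n ≤ 6 * S.card + 1 := by
  suffices haux : ∀ (k : ℕ) (S : Finset (Fin n)), S.Nonempty →
      (∀ u ∈ S, ∀ v ∈ S, ¬ adjG G u v) → (clN G S).card ≤ 6 * S.card + 1 →
      n - (clN G S).card ≤ k →
      ∃ S' : Finset (Fin n), S'.Nonempty ∧ (∀ u ∈ S', ∀ v ∈ S', ¬ adjG G u v) ∧
        (∀ b, b ∉ S' → ∃ u ∈ S', adjG G u b) ∧ n ≤ 6 * S'.card + 1 by
    refine haux n {⟨0, hn⟩} (Finset.singleton_nonempty _) ?_ ?_ (Nat.sub_le _ _)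
    · intro u hu v hv
      rw [Finset.mem_singleton] at hu hv
      subst hu; subst hv
      exact fun h => h.1 rfl
    · have : clN G {⟨0, hn⟩} = {⟨0, hn⟩} ∪ nbrG G ⟨0, hn⟩ := by
        simp [clN]
      rw [this]
      have := Finset.card_union_le ({⟨0, hn⟩} : Finset (Fin n)) (nbrG G ⟨0, hn⟩)
      have h6 := card_nbrG_le G hbip₁ hbip₂ hreg (⟨0, hn⟩ : Fin n)
      simp only [Finset.card_singleton] at this ⊢
      omega
  intro k
  induction k with
  | zero =>
    intro S hne hind hcard hk
    refine ⟨S, hne, hind, ?_, ?_⟩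
    · intro b hb
      have hU : clN G S = univ := by
        have h1 : (clN G S).card ≤ n := by
          simpa using Finset.card_le_univ (clN G S)
        have h2 : (clN G S).card = n := by omega
        apply Finset.eq_univ_of_card
        simpa using h2
      have : b ∈ clN G S := hU ▸ Finset.mem_univ b
      rw [mem_clN] at this
      rcases this with h | h
      · exact absurd h hb
      · exact h
    · have h1 : (clN G S).card ≤ n := by simpa using Finset.card_le_univ (clN G S)
      omega
  | succ k ih =>
    intro S hne hind hcard hk
    by_cases hU : clN G S = univ
    · refine ⟨S, hne, hind, ?_, ?_⟩
      · intro b hb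
        have : b ∈ clN G S := hU ▸ Finset.mem_univ b
        rw [mem_clN] at this
        rcases this with h | h
        · exact absurd h hb
        · exact h
      · have : (clN G S).card = n := by rw [hU]; simp
        omega
    · have hb : ∃ b, b ∉ clN G S := by
        by_contra hcon
        push_neg at hcon
        exact hU (Finset.eq_univ_iff_forall.mpr hcon)
      obtain ⟨b, hb⟩ := hb
      obtain ⟨u₀, hu₀⟩ := hne
      have hu₀' : u₀ ∈ clN G S := by rw [mem_clN]; exact Or.inl hu₀
      obtain ⟨p⟩ := hconn.preconnected (Sum.inl u₀) (Sum.inl b)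
      obtain ⟨u, v, hu, hv, hadj⟩ :=
        cross G hbip₁ hbip₂ (clN G S) p.length _ _ p le_rfl u₀ b rfl rfl hu₀' hb
      have hvS : v ∉ S := fun h => hv (by rw [mem_clN]; exact Or.inl h)
      refine ih (insert v S) ⟨v, Finset.mem_insert_self v S⟩ ?_ ?_ ?_
      · intro x hx y hy
        rw [Finset.mem_insert] at hx hy
        rcases hx with rfl | hx <;> rcases hy with rfl | hy
        · exact fun h => h.1 rfl
        · intro h
          exact hv (by rw [mem_clN]; exact Or.inr ⟨y, hy, adjG_symm G h⟩)
        · intro h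
          exact hv (by rw [mem_clN]; exact Or.inr ⟨x, hx, h⟩)
        · exact hind x hx y hy
      · have hsub : clN G (insert v S) ⊆ clN G S ∪ insert v (nbrG G v) := by
          intro x hx
          rw [mem_clN] at hx
          rw [Finset.mem_union, Finset.mem_insert]
          rcases hx with hx | ⟨w, hw, hadj'⟩
          · rw [Finset.mem_insert] at hx
            rcases hx with rfl | hx
            · exact Or.inr (Or.inl rfl)
            · exact Or.inl (by rw [mem_clN]; exact Or.inl hx)
          · rw [Finset.mem_insert] at hw
            rcases hw with rfl | hw
            · exact Or.inr (Or.inr (by simp [nbrG, hadj']))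
            · exact Or.inl (by rw [mem_clN]; exact Or.inr ⟨w, hw, hadj'⟩)
        have h1 : clN G S ∪ insert v (nbrG G v)
            = clN G S ∪ (insert v (nbrG G v) \ clN G S) := by
          rw [Finset.union_sdiff_self_eq_union]
        have h2 : (insert v (nbrG G v) \ clN G S) ⊆ (insert v (nbrG G v)).erase u := by
          intro x hx
          rw [Finset.mem_sdiff] at hx
          rw [Finset.mem_erase]
          exact ⟨fun hxu => hx.2 (hxu ▸ hu), hx.1⟩
        have hu' : u ∈ insert v (nbrG G v) := by
          rw [Finset.mem_insert]
          exact Or.inr (by simp [nbrG, adjG_symm G hadj])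
        have h3 : ((insert v (nbrG G v)).erase u).card ≤ 6 := by
          rw [Finset.card_erase_of_mem hu']
          have := Finset.card_insert_le v (nbrG G v)
          have h6 := card_nbrG_le G hbip₁ hbip₂ hreg v
          omega
        calc (clN G (insert v S)).card
            ≤ (clN G S ∪ (insert v (nbrG G v) \ clN G S)).card := by
              rw [← h1]; exact Finset.card_le_card hsub
          _ ≤ (clN G S).card + (insert v (nbrG G v) \ clN G S).card :=
              Finset.card_union_le _ _
          _ ≤ (clN G S).card + 6 := by
              have := Finset.card_le_card h2
              omega
          _ ≤ 6 * (insert v S).card + 1 := by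
              rw [Finset.card_insert_of_notMem hvS]
              omega
      · have hlt : (clN G S).card < (clN G (insert v S)).card := by
          apply Finset.card_lt_card
          constructor
          · exact clN_mono G (Finset.subset_insert v S)
          · intro hcon
            exact hv (hcon (by rw [mem_clN]; exact Or.inl (Finset.mem_insert_self v S)))
        omega

variable (H : Matrix (Fin n) (Fin n) (ZMod 2))

/-- the column of `H` at a left vertex. -/
def col (u : Fin n) : Fin n → ZMod 2 := fun c => H c u

lemma ip_eq (hH : ∀ c b, H c b = if G.Adj (Sum.inr c) (Sum.inl b) then 1 else 0)
    (u w : Fin n) :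
    ∑ c, H c u * H c w = (((rightN G u ∩ rightN G w).card : ℕ) : ZMod 2) := by
  have h1 : ∀ c, H c u * H c w
      = if (G.Adj (Sum.inr c) (Sum.inl u) ∧ G.Adj (Sum.inr c) (Sum.inl w)) then 1 else 0 := by
    intro c
    rw [hH, hH]
    split_ifs with h1 h2 h3 <;> simp_all
  rw [Finset.sum_congr rfl (fun c _ => h1 c), Finset.sum_boole]
  congr 1
  rw [Finset.filter_and]
  rfl

lemma ipc_self (hbip₁ : ∀ a b, ¬ G.Adj (Sum.inl a) (Sum.inl b))
    (hreg : ∀ v, (G.neighborSet v).ncard = 3) (u : Fin n) :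
    (((rightN G u ∩ rightN G u).card : ℕ) : ZMod 2) = 1 := by
  rw [Finset.inter_self, card_rightN G hbip₁ hreg u]
  decide

lemma ipc_nonadj {u w : Fin n} (hne : u ≠ w) (h : ¬ adjG G u w) :
    (((rightN G u ∩ rightN G w).card : ℕ) : ZMod 2) = 0 := by
  have : rightN G u ∩ rightN G w = ∅ := by
    rw [← Finset.not_nonempty_iff_eq_empty]
    exact fun hne2 => h ⟨hne, hne2⟩
  rw [this]
  simp

lemma ipc_adj (hgirth : 6 ≤ G.egirth) {u w : Fin n} (h : adjG G u w) :
    (((rightN G u ∩ rightN G w).card : ℕ) : ZMod 2) = 1 := by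
  have h1 : 1 ≤ (rightN G u ∩ rightN G w).card := Finset.card_pos.mpr h.2
  have h2 := card_common_le G hgirth h.1
  have : (rightN G u ∩ rightN G w).card = 1 := le_antisymm h2 h1
  rw [this]
  decide

lemma pairing (hH : ∀ c b, H c b = if G.Adj (Sum.inr c) (Sum.inl b) then 1 else 0)
    (T : Finset (Fin n)) (g : Fin n → ZMod 2)
    (hg : ∑ u ∈ T, g u • col H u = 0) (w : Fin n) :
    ∑ u ∈ T, g u * (((rightN G u ∩ rightN G w).card : ℕ) : ZMod 2) = 0 := by
  have hc : ∀ c, ∑ u ∈ T, g u * H c u = 0 := by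
    intro c
    have := congrFun hg c
    simpa [Finset.sum_apply, col] using this
  calc ∑ u ∈ T, g u * (((rightN G u ∩ rightN G w).card : ℕ) : ZMod 2)
      = ∑ u ∈ T, g u * ∑ c, H c u * H c w :=
        Finset.sum_congr rfl (fun u _ => by rw [ip_eq G H hH])
    _ = ∑ u ∈ T, ∑ c, g u * H c u * H c w := by
        refine Finset.sum_congr rfl (fun u _ => ?_)
        rw [Finset.mul_sum]
        exact Finset.sum_congr rfl (fun c _ => by ring)
    _ = ∑ c, ∑ u ∈ T, g u * H c u * H c w := Finset.sum_comm
    _ = ∑ c : Fin n, (∑ u ∈ T, g u * H c u) * H c w := by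
        refine Finset.sum_congr rfl (fun c _ => ?_)
        rw [Finset.sum_mul]
    _ = 0 := by simp [hc]

/-- columns indexed by an independent set are linearly independent. -/
lemma liS (hbip₁ : ∀ a b, ¬ G.Adj (Sum.inl a) (Sum.inl b))
    (hreg : ∀ v, (G.neighborSet v).ncard = 3)
    (hH : ∀ c b, H c b = if G.Adj (Sum.inr c) (Sum.inl b) then 1 else 0)
    (S : Finset (Fin n)) (hind : ∀ u ∈ S, ∀ v ∈ S, ¬ adjG G u v)
    (g : Fin n → ZMod 2) (hg : ∑ u ∈ S, g u • col H u = 0) :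
    ∀ w ∈ S, g w = 0 := by
  intro w hw
  have hp := pairing G H hH S g hg w
  rw [Finset.sum_eq_single w] at hp
  · rwa [ipc_self G hbip₁ hreg, mul_one] at hp
  · intro u hu hne
    rw [ipc_nonadj G hne (hind u hu w hw), mul_zero]
  · intro h; exact absurd hw h

/-- an extra vertex with a unique neighbor in `S` keeps the columns independent. -/
lemma liA (hbip₁ : ∀ a b, ¬ G.Adj (Sum.inl a) (Sum.inl b))
    (hreg : ∀ v, (G.neighborSet v).ncard = 3) (hgirth : 6 ≤ G.egirth)
    (hH : ∀ c b, H c b = if G.Adj (Sum.inr c) (Sum.inl b) then 1 else 0)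
    (S : Finset (Fin n)) (hind : ∀ u ∈ S, ∀ v ∈ S, ¬ adjG G u v)
    (b s : Fin n) (hbS : b ∉ S) (hsS : s ∈ S) (hadj : adjG G s b)
    (huniq : ∀ u ∈ S, u ≠ s → ¬ adjG G u b)
    (g : Fin n → ZMod 2) (hg : ∑ u ∈ insert b S, g u • col H u = 0) :
    ∀ w ∈ insert b S, g w = 0 := by
  have hbs : b ≠ s := fun h => hbS (h ▸ hsS)
  have step1 : ∀ w ∈ S, w ≠ s → g w = 0 := by
    intro w hw hws
    have hp := pairing G H hH _ g hg w
    rw [Finset.sum_insert hbS] at hp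
    have hbw : ¬ adjG G b w := fun h => huniq w hw hws (adjG_symm G h)
    have hbw' : b ≠ w := fun h => hbS (h ▸ hw)
    rw [ipc_nonadj G hbw' hbw, mul_zero, zero_add] at hp
    rw [Finset.sum_eq_single w] at hp
    · rwa [ipc_self G hbip₁ hreg, mul_one] at hp
    · intro u hu hne
      rw [ipc_nonadj G hne (hind u hu w hw), mul_zero]
    · intro h; exact absurd hw h
  have step2 : g s = g b := by
    have hp := pairing G H hH _ g hg s
    rw [Finset.sum_insert hbS] at hp
    rw [ipc_adj G hgirth (adjG_symm G hadj), mul_one] at hp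
    rw [Finset.sum_eq_single s] at hp
    · rw [ipc_self G hbip₁ hreg, mul_one] at hp
      have h2 : ∀ x y : ZMod 2, x + y = 0 → y = x := by decide
      exact h2 _ _ hp
    · intro u hu hne
      rw [ipc_nonadj G hne (hind u hu s hsS), mul_zero]
    · intro h; exact absurd hsS h
  have step3 : g b = 0 := by
    by_contra hgb
    have hgb1 : g b = 1 := by
      have h1 : ∀ x : ZMod 2, x ≠ 0 → x = 1 := by decide
      exact h1 _ hgb
    rw [Finset.sum_insert hbS] at hg
    have hrest : ∑ u ∈ S, g u • col H u = g s • col H s := by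
      rw [Finset.sum_eq_single s]
      · intro u hu hne
        rw [step1 u hu hne, zero_smul]
      · intro h; exact absurd hsS h
    rw [hrest, step2, hgb1, one_smul, one_smul] at hg
    have hcols : ∀ c, H c b = H c s := by
      intro c
      have hfc := congrFun hg c
      simp only [Pi.add_apply, Pi.zero_apply, col] at hfc
      have h2 : ∀ x y : ZMod 2, x + y = 0 → x = y := by decide
      exact h2 _ _ hfc
    have hRN : rightN G b = rightN G s := by
      ext c
      simp only [rightN, Finset.mem_filter, Finset.mem_univ, true_and]
      have := hcols c
      rw [hH, hH] at this
      split_ifs at this with h1 h2 h2 <;> simp_all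
    have h3 : (rightN G b ∩ rightN G s).card = 3 := by
      rw [hRN, Finset.inter_self, card_rightN G hbip₁ hreg]
    have := card_common_le G hgirth hbs
    omega
  intro w hw
  rw [Finset.mem_insert] at hw
  rcases hw with rfl | hw
  · exact step3
  · by_cases hws : w = s
    · rw [hws, step2, step3]
    · exact step1 w hw hws

/-- Linear independence of a finset of columns bounds the rank from below. -/
lemma card_le_rank (T : Finset (Fin n))
    (hli : ∀ g : Fin n → ZMod 2, ∑ u ∈ T, g u • col H u = 0 → ∀ u ∈ T, g u = 0) :
    T.card ≤ Module.finrank (ZMod 2) (LinearMap.range (Matrix.mulVecLin H)) := by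
  classical
  have hLI : LinearIndependent (ZMod 2) (fun i : {x // x ∈ T} => col H i.val) := by
    rw [Fintype.linearIndependent_iff]
    intro g hg i
    set g' : Fin n → ZMod 2 := fun u => if h : u ∈ T then g ⟨u, h⟩ else 0 with hg'
    have hsum : ∑ u ∈ T, g' u • col H u = 0 := by
      rw [← Finset.sum_attach T (fun u => g' u • col H u)]
      calc ∑ x ∈ T.attach, g' x.val • col H x.val
          = ∑ x ∈ T.attach, g x • col H x.val :=
            Finset.sum_congr rfl (fun x _ => by simp [hg', x.prop])
        _ = 0 := by rw [← hg]; rw [← Finset.univ_eq_attach]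
    have := hli g' hsum i.val i.prop
    simpa [hg', i.prop] using this
  have hspan := finrank_span_eq_card hLI
  have hle : Submodule.span (ZMod 2) (Set.range fun i : {x // x ∈ T} => col H i.val)
      ≤ LinearMap.range (Matrix.mulVecLin H) := by
    rw [Submodule.span_le]
    rintro _ ⟨i, rfl⟩
    refine ⟨Pi.single i.val 1, ?_⟩
    rw [Matrix.mulVecLin_apply, Matrix.mulVec_single_one]
    rfl
  have hmono := Submodule.finrank_mono hle
  rw [hspan, Fintype.card_coe] at hmono
  exact hmono

end Stmt7Aux

open Stmt7Aux in
/-- The dimension of the code of a connected bipartite cubic graph with girth at least 6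
and parts of size `n ≥ 7` is at most `5n/6`. -/
theorem stmt_7 (n : ℕ) (hn : 7 ≤ n) (G : SimpleGraph (Fin n ⊕ Fin n))
    [DecidableRel G.Adj]
    (hconn : G.Connected)
    (hbip₁ : ∀ a b, ¬ G.Adj (Sum.inl a) (Sum.inl b))
    (hbip₂ : ∀ a b, ¬ G.Adj (Sum.inr a) (Sum.inr b))
    (hreg : ∀ v, (G.neighborSet v).ncard = 3)
    (hgirth : 6 ≤ G.egirth)
    (H : Matrix (Fin n) (Fin n) (ZMod 2))
    (hH : ∀ c b, H c b = if G.Adj (Sum.inr c) (Sum.inl b) then 1 else 0) :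
    6 * Module.finrank (ZMod 2) (LinearMap.ker (Matrix.mulVecLin H)) ≤ 5 * n := by
  classical
  set r := Module.finrank (ZMod 2) (LinearMap.range (Matrix.mulVecLin H)) with hr
  have hrn : r + Module.finrank (ZMod 2) (LinearMap.ker (Matrix.mulVecLin H)) = n := by
    have := LinearMap.finrank_range_add_finrank_ker (Matrix.mulVecLin H)
    rwa [Module.finrank_fintype_fun_eq_card, Fintype.card_fin] at this
  suffices hnr : n ≤ 6 * r by omega
  obtain ⟨S, hSne, hind, hdom, hcard⟩ := greedy G hconn hbip₁ hbip₂ hreg (by omega)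
  by_cases hA : ∃ b, b ∉ S ∧ (S.filter (fun u => adjG G u b)).card = 1
  · obtain ⟨b, hbS, hb1⟩ := hA
    obtain ⟨s, hs⟩ := Finset.card_eq_one.mp hb1
    have hsmem : s ∈ S.filter (fun u => adjG G u b) := hs ▸ Finset.mem_singleton_self s
    rw [Finset.mem_filter] at hsmem
    have huniq : ∀ u ∈ S, u ≠ s → ¬ adjG G u b := by
      intro u hu hne hadj'
      have : u ∈ S.filter (fun u => adjG G u b) := Finset.mem_filter.2 ⟨hu, hadj'⟩
      rw [hs, Finset.mem_singleton] at this
      exact hne this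
    have hrank := card_le_rank H (insert b S)
      (liA G H hbip₁ hreg hgirth hH S hind b s hbS hsmem.1 hsmem.2 huniq)
    rw [Finset.card_insert_of_notMem hbS] at hrank
    omega
  · push_neg at hA
    have h2 : ∀ b, b ∉ S → 2 ≤ (S.filter (fun u => adjG G u b)).card := by
      intro b hb
      obtain ⟨u, hu, hadj'⟩ := hdom b hb
      have h1 : 0 < (S.filter (fun u => adjG G u b)).card :=
        Finset.card_pos.mpr ⟨u, Finset.mem_filter.2 ⟨hu, hadj'⟩⟩
      have := hA b hb
      omega
    have hsum1 : 2 * (univ \ S).card ≤ ∑ b ∈ univ \ S, (S.filter (fun u => adjG G u b)).card := by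
      calc 2 * (univ \ S).card = ∑ _b ∈ univ \ S, 2 := by
            rw [Finset.sum_const, smul_eq_mul, mul_comm]
        _ ≤ _ := Finset.sum_le_sum
            (fun b hb => h2 b (by rw [Finset.mem_sdiff] at hb; exact hb.2))
    have hswap : ∑ b ∈ univ \ S, (S.filter (fun u => adjG G u b)).card
        = ∑ u ∈ S, ((univ \ S).filter (fun b => adjG G u b)).card := by
      simp_rw [Finset.card_filter]
      exact Finset.sum_comm
    have hsum2 : ∑ u ∈ S, ((univ \ S).filter (fun b => adjG G u b)).card ≤ 6 * S.card := by
      calc ∑ u ∈ S, ((univ \ S).filter (fun b => adjG G u b)).card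
          ≤ ∑ _u ∈ S, 6 := by
            refine Finset.sum_le_sum (fun u _ => ?_)
            refine le_trans (Finset.card_le_card ?_) (card_nbrG_le G hbip₁ hbip₂ hreg u)
            intro x hx
            rw [Finset.mem_filter] at hx
            simp [nbrG, hx.2]
        _ = 6 * S.card := by rw [Finset.sum_const, smul_eq_mul, mul_comm]
    have hcards : (univ \ S).card = n - S.card := by
      rw [Finset.card_sdiff_of_subset (Finset.subset_univ S), Finset.card_univ, Fintype.card_fin]
    have hSn : S.card ≤ n := by
      have := Finset.card_le_univ S
      simpa using this
    have hrank := card_le_rank H S (liS G H hbip₁ hreg hH S hind)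
    omega
end

section
/- Let G be a connected bipartite cubic graph with girth at least 6 and biadjacency matrix H of size n×n over F₂. If S is an independent set of the bit node graph Γ, then the columns of H indexed by S are linearly independent over F₂, and hence rank₂(H) ≥ α(Γ), where α(Γ) is the independence number of Γ. -/
theorem stmt_8_dot (n : ℕ) (G : SimpleGraph (Fin n ⊕ Fin n))
    [DecidableRel G.Adj]
    (hbip₁ : ∀ a b, ¬ G.Adj (Sum.inl a) (Sum.inl b))
    (hreg : ∀ v, (G.neighborSet v).ncard = 3)
    (H : Matrix (Fin n) (Fin n) (ZMod 2))
    (hH : ∀ c b, H c b = if G.Adj (Sum.inr c) (Sum.inl b) then 1 else 0)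
    (Γ : SimpleGraph (Fin n))
    (hΓ : ∀ u v, Γ.Adj u v ↔ u ≠ v ∧ ∃ w, G.Adj (Sum.inl u) w ∧ G.Adj (Sum.inl v) w)
    (u v : Fin n) (hno : ¬ Γ.Adj u v) :
    (∑ i, H i u * H i v) = if u = v then 1 else 0 := by
  by_cases huv : u = v
  · subst huv
    simp only [if_pos rfl]
    have h1 : (∑ i, H i u * H i u) =
        ((Finset.univ.filter (fun i => G.Adj (Sum.inr i) (Sum.inl u))).card : ZMod 2) := by
      rw [← Finset.sum_boole]
      refine Finset.sum_congr rfl fun i _ => ?_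
      rw [hH]
      by_cases h : G.Adj (Sum.inr i) (Sum.inl u) <;> simp [h]
    rw [h1]
    have himg : G.neighborSet (Sum.inl u) =
        Sum.inr '' {i : Fin n | G.Adj (Sum.inr i) (Sum.inl u)} := by
      ext w
      constructor
      · intro hw
        cases w with
        | inl a => exact absurd hw (hbip₁ u a)
        | inr a => exact ⟨a, hw.symm, rfl⟩
      · rintro ⟨a, ha, rfl⟩
        exact ha.symm
    have hc : {i : Fin n | G.Adj (Sum.inr i) (Sum.inl u)}.ncard = 3 := by
      have := hreg (Sum.inl u)
      rw [himg, Set.ncard_image_of_injective _ Sum.inr_injective] at this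
      exact this
    have hc2 : (Finset.univ.filter (fun i => G.Adj (Sum.inr i) (Sum.inl u))).card = 3 := by
      rw [← hc]
      rw [Set.ncard_eq_toFinset_card']
      congr 1
      ext i
      simp
    rw [hc2]
    decide
  · rw [if_neg huv]
    rw [hΓ] at hno
    push_neg at hno
    have hnow := hno huv
    refine Finset.sum_eq_zero fun i _ => ?_
    rw [hH, hH]
    by_cases h1 : G.Adj (Sum.inr i) (Sum.inl u)
    · by_cases h2 : G.Adj (Sum.inr i) (Sum.inl v)
      · exact absurd h2.symm (hnow (Sum.inr i) h1.symm)
      · simp [h2]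
    · simp [h1]

/-- The columns of `H` indexed by an independent set of the bit node graph are linearly
independent over `F₂`; hence `rank₂(H) ≥ α(Γ)`. -/
theorem stmt_8 (n : ℕ) (G : SimpleGraph (Fin n ⊕ Fin n))
    [DecidableRel G.Adj]
    (hconn : G.Connected)
    (hbip₁ : ∀ a b, ¬ G.Adj (Sum.inl a) (Sum.inl b))
    (hbip₂ : ∀ a b, ¬ G.Adj (Sum.inr a) (Sum.inr b))
    (hreg : ∀ v, (G.neighborSet v).ncard = 3)
    (hgirth : 6 ≤ G.egirth)
    (H : Matrix (Fin n) (Fin n) (ZMod 2))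
    (hH : ∀ c b, H c b = if G.Adj (Sum.inr c) (Sum.inl b) then 1 else 0)
    (Γ : SimpleGraph (Fin n))
    (hΓ : ∀ u v, Γ.Adj u v ↔ u ≠ v ∧ ∃ w, G.Adj (Sum.inl u) w ∧ G.Adj (Sum.inl v) w) :
    (∀ S : Finset (Fin n), (∀ u ∈ S, ∀ v ∈ S, ¬ Γ.Adj u v) →
        LinearIndependent (ZMod 2) (fun j : S => fun i => H i (j : Fin n))) ∧
      sSup {k : ℕ | ∃ S : Finset (Fin n), S.card = k ∧ ∀ u ∈ S, ∀ v ∈ S, ¬ Γ.Adj u v} ≤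
        H.rank := by
  have key : ∀ S : Finset (Fin n), (∀ u ∈ S, ∀ v ∈ S, ¬ Γ.Adj u v) →
      LinearIndependent (ZMod 2) (fun j : S => fun i => H i (j : Fin n)) := by
    intro S hS
    rw [Fintype.linearIndependent_iff]
    intro g hg u
    have h0 : ∀ i : Fin n, (∑ j : S, g j * H i (j : Fin n)) = 0 := by
      intro i
      have := congrFun hg i
      simpa using this
    have hdot : ∀ j : S, (∑ i, H i (u : Fin n) * H i (j : Fin n)) =
        if (u : Fin n) = (j : Fin n) then 1 else 0 := fun j =>
      stmt_8_dot n G hbip₁ hreg H hH Γ hΓ u j (hS u u.2 j j.2)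
    have : (0 : ZMod 2) = ∑ j : S, g j * (if (u : Fin n) = (j : Fin n) then 1 else 0) := by
      calc (0 : ZMod 2) = ∑ i, H i (u : Fin n) * (∑ j : S, g j * H i (j : Fin n)) := by
            symm
            refine Finset.sum_eq_zero fun i _ => ?_
            rw [h0 i, mul_zero]
        _ = ∑ i, ∑ j : S, g j * (H i (u : Fin n) * H i (j : Fin n)) := by
            refine Finset.sum_congr rfl fun i _ => ?_
            rw [Finset.mul_sum]
            exact Finset.sum_congr rfl fun j _ => by ring
        _ = ∑ j : S, ∑ i, g j * (H i (u : Fin n) * H i (j : Fin n)) := Finset.sum_comm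
        _ = ∑ j : S, g j * (∑ i, H i (u : Fin n) * H i (j : Fin n)) := by
            refine Finset.sum_congr rfl fun j _ => ?_
            rw [Finset.mul_sum]
        _ = ∑ j : S, g j * (if (u : Fin n) = (j : Fin n) then 1 else 0) := by
            refine Finset.sum_congr rfl fun j _ => ?_
            rw [hdot j]
    have hsum : (∑ j : S, g j * (if (u : Fin n) = (j : Fin n) then 1 else 0)) = g u := by
      have heq : ∀ j : S, ((u : Fin n) = (j : Fin n)) ↔ (j = u) := by
        intro j; constructor
        · intro h; exact Subtype.ext h.symm
        · intro h; rw [h]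
      calc (∑ j : S, g j * (if (u : Fin n) = (j : Fin n) then 1 else 0))
          = ∑ j : S, g j * (if j = u then 1 else 0) := by
            refine Finset.sum_congr rfl fun j _ => ?_
            rw [if_congr (heq j) rfl rfl]
        _ = g u := by simp
    rw [this, hsum]
  refine ⟨key, ?_⟩
  refine csSup_le ?_ ?_
  · exact ⟨0, ⟨∅, by simp, by simp⟩⟩
  rintro k ⟨S, hcard, hind⟩
  have li := key S hind
  have hsub : Set.range (fun j : S => fun i => H i (j : Fin n)) ⊆ Set.range H.transpose := by
    rintro _ ⟨j, rfl⟩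
    exact ⟨(j : Fin n), rfl⟩
  have hfr : Module.finrank (ZMod 2)
      (Submodule.span (ZMod 2) (Set.range (fun j : S => fun i => H i (j : Fin n)))) = k := by
    rw [finrank_span_eq_card li, Fintype.card_coe, hcard]
  rw [Matrix.rank_eq_finrank_span_cols, ← hfr]
  exact Submodule.finrank_mono (Submodule.span_mono hsub)
end

section
/- Let G be a connected bipartite cubic vertex-transitive graph on 2^t vertices (t ≥ 2), with parts of size 2^{t-1}, and let H be its biadjacency matrix over F₂. Then the code C = ker H is the zero code, i.e., C has parameters [2^{t-1}, 0]; equivalently, H has full rank over F₂. -/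
open MulAction

lemma zmod_two_eq_one_of_ne_zero : ∀ c : ZMod 2, c ≠ 0 → c = 1 := by decide

lemma zmod_two_three_ne_zero : ((3 : ℕ) : ZMod 2) ≠ 0 := by decide

set_option synthInstance.maxHeartbeats 1000000 in
set_option maxHeartbeats 1600000 in
/-- Key lemma: the adjacency matrix over `ZMod 2` of a vertex-transitive graph of
degree 3 on `2^t` vertices has trivial kernel. -/
theorem aux_ker_adj_eq_bot {V : Type} [Fintype V] [DecidableEq V]
    (G : SimpleGraph V) [DecidableRel G.Adj] (t : ℕ)
    (hcard : Nat.card V = 2 ^ t)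
    (hreg : ∀ v, (G.neighborSet v).ncard = 3)
    (htrans : ∀ u v : V, ∃ e : G ≃g G, e u = v)
    (A : Matrix V V (ZMod 2))
    (hA : ∀ u v, A u v = if G.Adj u v then 1 else 0) :
    LinearMap.ker (Matrix.mulVecLin A) = ⊥ := by
  classical
  by_contra hne
  haveI : Fact (Nat.Prime 2) := ⟨Nat.prime_two⟩
  -- the automorphism group as a subgroup of permutations
  set Aut : Subgroup (Equiv.Perm V) :=
    { carrier := {σ | ∀ u v, G.Adj (σ u) (σ v) ↔ G.Adj u v}
      one_mem' := by intro u v; simp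
      mul_mem' := by
        intro a b ha hb u v
        rw [Equiv.Perm.mul_apply, Equiv.Perm.mul_apply, ha, hb]
      inv_mem' := by
        intro a ha u v
        have h := ha (a⁻¹ u) (a⁻¹ v)
        rw [Equiv.Perm.inv_def, Equiv.apply_symm_apply, Equiv.apply_symm_apply] at h
        exact h.symm } with hAutdef
  haveI : IsPretransitive Aut V := by
    constructor
    intro u v
    obtain ⟨e, he⟩ := htrans u v
    exact ⟨⟨e.toEquiv, fun a b => e.map_adj_iff⟩, he⟩
  obtain ⟨P⟩ : Nonempty (Sylow 2 Aut) := inferInstance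
  -- the Sylow 2-subgroup acts transitively on V
  have hPtrans : ∀ u v : V, ∃ σ : Aut, σ ∈ (P : Subgroup Aut) ∧ (σ : Equiv.Perm V) u = v := by
    intro u v
    set S := stabilizer Aut u with hS
    have hidx : S.index = 2 ^ t := by
      rw [hS, index_stabilizer_of_transitive]; exact hcard
    have h1 : S.relIndex ↑P * (↑P : Subgroup Aut).index = (S ⊓ ↑P).index := by
      have h := Subgroup.relIndex_inf_mul_relIndex S ↑P ⊤
      simpa [Subgroup.relIndex_top_right] using h
    have h2 : S.index ∣ (S ⊓ ↑P).index := Subgroup.index_dvd_of_le inf_le_left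
    have h3 : ¬ (2 ∣ (↑P : Subgroup Aut).index) := P.not_dvd_index
    have hcop : Nat.Coprime (2 ^ t) (↑P : Subgroup Aut).index :=
      ((Nat.Prime.coprime_iff_not_dvd Nat.prime_two).mpr h3).pow_left t
    have h4 : 2 ^ t ∣ S.relIndex ↑P := by
      refine hcop.dvd_of_dvd_mul_right ?_
      rw [h1, ← hidx]; exact h2
    have h5 : (stabilizer ↥(P : Subgroup Aut) u).index = S.relIndex ↑P := by
      unfold Subgroup.relIndex
      congr 1
    have h6 : (MulAction.orbit ↥(P : Subgroup Aut) u).ncard = S.relIndex ↑P := by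
      rw [← index_stabilizer, h5]
    have h9 : 2 ^ t ≤ (MulAction.orbit ↥(P : Subgroup Aut) u).ncard := by
      rw [h6]
      refine Nat.le_of_dvd ?_ h4
      rw [← h6]
      have hne' : (MulAction.orbit ↥(P : Subgroup Aut) u).Nonempty := ⟨u, mem_orbit_self u⟩
      have := Set.ncard_pos (s := MulAction.orbit ↥(P : Subgroup Aut) u) (Set.toFinite _)
      exact this.mpr hne'
    have horb : MulAction.orbit ↥(P : Subgroup Aut) u = Set.univ := by
      apply Set.eq_of_subset_of_ncard_le (Set.subset_univ _)
      · rw [Set.ncard_univ, hcard]; exact h9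
    have hv : v ∈ MulAction.orbit ↥(P : Subgroup Aut) u := horb ▸ Set.mem_univ v
    obtain ⟨σ, hσ⟩ := hv
    exact ⟨↑σ, σ.2, hσ⟩
  -- the kernel is a nontrivial group of 2-power order
  have hN2 : 2 ∣ Nat.card ↥(LinearMap.ker (Matrix.mulVecLin A)) := by
    have hdvd : Nat.card ↥(LinearMap.ker (Matrix.mulVecLin A)) ∣ Nat.card (V → ZMod 2) :=
      AddSubgroup.card_addSubgroup_dvd_card (LinearMap.ker (Matrix.mulVecLin A)).toAddSubgroup
    have hcards : Nat.card (V → ZMod 2) = 2 ^ Fintype.card V := by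
      simp [Nat.card_eq_fintype_card]
    rw [hcards] at hdvd
    obtain ⟨k, _, hEq⟩ := (Nat.dvd_prime_pow Nat.prime_two).mp hdvd
    have hnontriv : Nontrivial ↥(LinearMap.ker (Matrix.mulVecLin A)) := by
      obtain ⟨x, hxN, hx0⟩ := (Submodule.ne_bot_iff _).mp hne
      exact ⟨⟨x, hxN⟩, 0, by simpa [Subtype.ext_iff] using hx0⟩
    have h1 : 1 < Nat.card ↥(LinearMap.ker (Matrix.mulVecLin A)) := Finite.one_lt_card
    rw [hEq] at h1 ⊢
    rcases Nat.eq_zero_or_pos k with hk | hk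
    · simp [hk] at h1
    · exact dvd_pow_self 2 (by omega)
  -- permutations in Aut preserve the kernel
  have key : ∀ τ : Equiv.Perm V, τ ∈ Aut → ∀ x : V → ZMod 2, A.mulVec x = 0 →
      A.mulVec (fun v => x (τ v)) = 0 := by
    intro τ hτ x hx
    funext u
    have step : (A.mulVec fun v => x (τ v)) u = (A.mulVec x) (τ u) := by
      simp only [Matrix.mulVec, dotProduct]
      have hterm : ∀ v, A u v * x (τ v) = A (τ u) (τ v) * x (τ v) := by
        intro v
        rw [hA, hA, if_congr (hτ u v) rfl rfl]
      rw [Finset.sum_congr rfl (fun v _ => hterm v)]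
      exact Equiv.sum_comp τ (fun w => A (τ u) w * x w)
    rw [step, hx]
    rfl
  have hmemker : ∀ x : ↥(LinearMap.ker (Matrix.mulVecLin A)), A.mulVec ↑x = 0 := by
    intro x
    have h := LinearMap.mem_ker.mp x.2
    rwa [Matrix.mulVecLin_apply] at h
  letI : MulAction ↥(P : Subgroup Aut) ↥(LinearMap.ker (Matrix.mulVecLin A)) :=
    { smul := fun σ x => ⟨fun v => (x : V → ZMod 2) ((((σ : Aut) : Equiv.Perm V))⁻¹ v), by
        refine LinearMap.mem_ker.mpr ?_
        rw [Matrix.mulVecLin_apply]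
        exact key _ ((σ : Aut)⁻¹).2 _ (hmemker x)⟩
      one_smul := fun x => by
        apply Subtype.ext
        funext v
        rfl
      mul_smul := fun a b x => by
        apply Subtype.ext
        funext v
        rfl }
  have hsmul_apply : ∀ (σ : ↥(P : Subgroup Aut)) (x : ↥(LinearMap.ker (Matrix.mulVecLin A)))
      (v : V), ((σ • x : ↥(LinearMap.ker (Matrix.mulVecLin A))) : V → ZMod 2) v
        = (x : V → ZMod 2) ((((σ : Aut) : Equiv.Perm V))⁻¹ v) :=
    fun σ x v => rfl
  have hP2 : IsPGroup 2 ↥(P : Subgroup Aut) := P.isPGroup'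
  have h0fix : (0 : ↥(LinearMap.ker (Matrix.mulVecLin A))) ∈
      fixedPoints ↥(P : Subgroup Aut) ↥(LinearMap.ker (Matrix.mulVecLin A)) := by
    intro σ
    apply Subtype.ext
    funext v
    rw [hsmul_apply]
    rfl
  obtain ⟨b, hbfix, hb0⟩ :=
    hP2.exists_fixed_point_of_prime_dvd_card_of_fixed_point
      ↥(LinearMap.ker (Matrix.mulVecLin A)) hN2 h0fix
  have hfker : A.mulVec (b : V → ZMod 2) = 0 := hmemker b
  have hfinv : ∀ (σ : ↥(P : Subgroup Aut)) (v : V),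
      (b : V → ZMod 2) ((((σ : Aut) : Equiv.Perm V))⁻¹ v) = (b : V → ZMod 2) v := by
    intro σ v
    conv_rhs => rw [← hbfix σ]
    rw [hsmul_apply]
  have hfne : (b : V → ZMod 2) ≠ 0 := by
    intro h
    exact hb0 (Subtype.ext h).symm
  obtain ⟨v₀, hv₀⟩ : ∃ v₀, (b : V → ZMod 2) v₀ ≠ 0 := by
    by_contra h
    push_neg at h
    exact hfne (funext fun v => h v)
  have hconst : ∀ v, (b : V → ZMod 2) v = (b : V → ZMod 2) v₀ := by
    intro v
    obtain ⟨σ, hσP, hσ⟩ := hPtrans v₀ v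
    have h := hfinv ⟨σ, hσP⟩ v
    have hinv : ((σ : Equiv.Perm V))⁻¹ v = v₀ := by
      rw [← hσ, Equiv.Perm.inv_def, Equiv.symm_apply_apply]
    rw [hinv] at h
    exact h.symm
  have hf1 : ∀ v, (b : V → ZMod 2) v = 1 := by
    intro v
    rw [hconst v]
    exact zmod_two_eq_one_of_ne_zero _ hv₀
  have hsum : A.mulVec (b : V → ZMod 2) v₀ = 0 := congrFun hfker v₀
  have hsum2 : A.mulVec (b : V → ZMod 2) v₀ = ((G.neighborFinset v₀).card : ZMod 2) := by
    simp only [Matrix.mulVec, dotProduct]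
    rw [Finset.sum_congr rfl (fun v _ => by rw [hf1 v, mul_one, hA])]
    rw [Finset.sum_boole]
    congr 2
    ext u
    simp [SimpleGraph.mem_neighborFinset]
  have hcard3 : (G.neighborFinset v₀).card = 3 := by
    rw [← hreg v₀, SimpleGraph.neighborFinset_def, Set.ncard_eq_toFinset_card']
  rw [hsum2, hcard3] at hsum
  exact absurd hsum zmod_two_three_ne_zero

/-- For a connected bipartite cubic vertex-transitive graph on `2^t` vertices, the code
with parity-check matrix the biadjacency matrix `H` is the zero code. -/
theorem stmt_10 (t : ℕ) (ht : 2 ≤ t)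
    (G : SimpleGraph (Fin (2 ^ (t - 1)) ⊕ Fin (2 ^ (t - 1))))
    [DecidableRel G.Adj]
    (hconn : G.Connected)
    (hbip₁ : ∀ a b, ¬ G.Adj (Sum.inl a) (Sum.inl b))
    (hbip₂ : ∀ a b, ¬ G.Adj (Sum.inr a) (Sum.inr b))
    (hreg : ∀ v, (G.neighborSet v).ncard = 3)
    (htrans : ∀ u v, ∃ e : G ≃g G, e u = v)
    (H : Matrix (Fin (2 ^ (t - 1))) (Fin (2 ^ (t - 1))) (ZMod 2))
    (hH : ∀ c b, H c b = if G.Adj (Sum.inr c) (Sum.inl b) then 1 else 0) :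
    LinearMap.ker (Matrix.mulVecLin H) = ⊥ := by
  classical
  set A : Matrix (Fin (2 ^ (t - 1)) ⊕ Fin (2 ^ (t - 1)))
      (Fin (2 ^ (t - 1)) ⊕ Fin (2 ^ (t - 1))) (ZMod 2) :=
    Matrix.of fun u v => if G.Adj u v then 1 else 0 with hAdef
  have hcard : Nat.card (Fin (2 ^ (t - 1)) ⊕ Fin (2 ^ (t - 1))) = 2 ^ t := by
    have h : 2 ^ (t - 1) + 2 ^ (t - 1) = 2 ^ t := by
      rw [← two_mul, ← pow_succ']
      congr 1
      omega
    simp [Nat.card_eq_fintype_card, h]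
  have hker := aux_ker_adj_eq_bot G t hcard hreg htrans A (fun u v => rfl)
  refine (Submodule.eq_bot_iff _).mpr fun x hx => ?_
  have hx' : H.mulVec x = 0 := by
    rwa [LinearMap.mem_ker, Matrix.mulVecLin_apply] at hx
  set y : (Fin (2 ^ (t - 1)) ⊕ Fin (2 ^ (t - 1))) → ZMod 2 := Sum.elim x 0 with hy
  have hAy : ∀ u, A.mulVec y u = 0 := by
    intro u
    cases u with
    | inl b =>
      simp only [Matrix.mulVec, dotProduct, Fintype.sum_sum_type]
      have h1 : ∀ a, A (Sum.inl b) (Sum.inl a) * y (Sum.inl a) = 0 := by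
        intro a
        simp [hAdef, hbip₁ b a]
      have h2 : ∀ c, A (Sum.inl b) (Sum.inr c) * y (Sum.inr c) = 0 := by
        intro c
        simp [hy]
      rw [Finset.sum_congr rfl (fun a _ => h1 a), Finset.sum_congr rfl (fun c _ => h2 c)]
      simp
    | inr c =>
      simp only [Matrix.mulVec, dotProduct, Fintype.sum_sum_type]
      have h1 : ∀ b, A (Sum.inr c) (Sum.inl b) * y (Sum.inl b) = H c b * x b := by
        intro b
        rw [hH c b]
        simp [hAdef, hy]
      have h2 : ∀ b, A (Sum.inr c) (Sum.inr b) * y (Sum.inr b) = 0 := by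
        intro b
        simp [hy]
      rw [Finset.sum_congr rfl (fun b _ => h1 b), Finset.sum_congr rfl (fun b _ => h2 b)]
      have hc := congrFun hx' c
      simp only [Matrix.mulVec, dotProduct, Pi.zero_apply] at hc
      simpa using hc
  have hyker : y ∈ LinearMap.ker (Matrix.mulVecLin A) := by
    rw [LinearMap.mem_ker, Matrix.mulVecLin_apply]
    funext u
    exact hAy u
  rw [hker, Submodule.mem_bot] at hyker
  funext b
  have hb := congrFun hyker (Sum.inl b)
  simpa [hy] using hb
end
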